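/- Let P ⊂ ℝ^ℱ_{≥0} be the image of a simple n-polytope under the distance embedding, V_P ⊂ ℝ^ℱ its direction subspace, and V_P^⊥ the orthogonal complement. Then for every p ∈ P and every nonzero a ∈ V_P^⊥, the coordinatewise-exponential orbit exp(V_P^⊥) * p = {(exp(a_F) p_F)_{F∈ℱ} : a ∈ V_P^⊥} meets P only at p: i.e. for p, q ∈ P and a ∈ V_P^⊥, if exp(a) * p = q coordinatewise, then a = 0 and p = q. -/

import Mathlib

variable {n : ℕ} {ι : Type*} [Fintype ι]

/-- The direction subspace `V_P = A_P(ℝⁿ) ⊂ ℝ^ℱ`, i.e. the span of the columns of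
the defining matrix `A_P`. -/
def dirSpace (A : ι → (Fin n → ℝ)) : Submodule ℝ (EuclideanSpace ℝ ι) :=
  Submodule.span ℝ (Set.range fun r : Fin n => (WithLp.toLp 2 (fun i => A i r) : EuclideanSpace ℝ ι))

/-- For a simple polytope `P` (embedded in `ℝ^ℱ_{≥0}` via the facet-distance map
`d p = A_P p − b`), the coordinatewise-exponential orbit of the image of a point
`p` under `exp(V_P^⊥)` meets the image of `P` only at `p`: if `p, q ∈ P` and
`a ∈ V_P^⊥` satisfy `d q = exp(a) * d p` coordinatewise, then `a = 0` and `p = q`. -/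
theorem exp_orbit_meets_polytope_once
    (A : ι → (Fin n → ℝ)) (b : ι → ℝ)
    (Q : Set (Fin n → ℝ))
    (hQ : Q = {x | ∀ i, b i ≤ ∑ r, A i r * x r})
    (hrank : Function.Injective
      (fun x : Fin n → ℝ => (fun i => ∑ r, A i r * x r : ι → ℝ)))
    (hsimple : ∀ x ∈ Q,
      LinearIndependent ℝ (fun i : {i : ι // ∑ r, A i r * x r = b i} => A i.1))
    (p : Fin n → ℝ) (hp : p ∈ Q) (q : Fin n → ℝ) (hq : q ∈ Q)
    (a : EuclideanSpace ℝ ι) (ha : a ∈ (dirSpace A)ᗮ)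
    (horbit : ∀ i,
      (∑ r, A i r * q r) - b i = Real.exp (a i) * ((∑ r, A i r * p r) - b i)) :
    a = 0 ∧ p = q := by
  classical
  have hp' : ∀ i, b i ≤ ∑ r, A i r * p r := by rw [hQ] at hp; exact hp
  have hq' : ∀ i, b i ≤ ∑ r, A i r * q r := by rw [hQ] at hq; exact hq
  set dp : ι → ℝ := fun i => (∑ r, A i r * p r) - b i with hdp
  set dq : ι → ℝ := fun i => (∑ r, A i r * q r) - b i with hdq
  have hdp0 : ∀ i, 0 ≤ dp i := fun i => sub_nonneg.mpr (hp' i)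
  -- orthogonality: a is orthogonal to every column of A
  have hcol : ∀ r, ∑ i, a i * A i r = 0 := by
    intro r
    have hm : (WithLp.toLp 2 (fun i => A i r) : EuclideanSpace ℝ ι) ∈ dirSpace A :=
      Submodule.subset_span ⟨r, rfl⟩
    have h := (Submodule.mem_orthogonal _ a).mp ha _ hm
    simpa [PiLp.inner_apply, RCLike.inner_apply, mul_comm] using h
  -- key identity
  have key : ∑ i, a i * ((Real.exp (a i) - 1) * dp i) = 0 := by
    have hd : ∀ i, (Real.exp (a i) - 1) * dp i = dq i - dp i := by
      intro i
      have := horbit i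
      simp only [hdp, hdq] at *
      linarith [this]
    have h1 : ∑ i, a i * (dq i - dp i) = 0 := by
      have hstep : ∀ i, a i * (dq i - dp i) = ∑ r, a i * A i r * (q r - p r) := by
        intro i
        simp only [hdp, hdq]
        rw [Finset.sum_congr rfl (fun r _ => by ring : ∀ r ∈ Finset.univ,
          a i * A i r * (q r - p r) = a i * (A i r * q r - A i r * p r)),
          ← Finset.mul_sum, Finset.sum_sub_distrib]
        ring
      calc ∑ i, a i * (dq i - dp i) = ∑ i, ∑ r, a i * A i r * (q r - p r) := by
              exact Finset.sum_congr rfl fun i _ => hstep i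
        _ = ∑ r, ∑ i, a i * A i r * (q r - p r) := Finset.sum_comm
        _ = ∑ r : Fin n, (∑ i, a i * A i r) * (q r - p r) := by
              exact Finset.sum_congr rfl fun r _ => (Finset.sum_mul _ _ _).symm
        _ = 0 := by simp [hcol]
    calc ∑ i, a i * ((Real.exp (a i) - 1) * dp i)
        = ∑ i, a i * (dq i - dp i) := by
          exact Finset.sum_congr rfl fun i _ => by rw [hd]
      _ = 0 := h1
  -- each term is nonnegative
  have hnn : ∀ i ∈ Finset.univ, 0 ≤ a i * ((Real.exp (a i) - 1) * dp i) := by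
    intro i _
    have h1 : 0 ≤ a i * (Real.exp (a i) - 1) := by
      rcases le_or_gt 0 (a i) with h | h
      · exact mul_nonneg h (by linarith [Real.one_le_exp h])
      · have : Real.exp (a i) < 1 := Real.exp_lt_one_iff.mpr h
        nlinarith
    calc (0:ℝ) ≤ a i * (Real.exp (a i) - 1) * dp i := mul_nonneg h1 (hdp0 i)
      _ = a i * ((Real.exp (a i) - 1) * dp i) := by ring
  have hterm : ∀ i, a i * ((Real.exp (a i) - 1) * dp i) = 0 := fun i =>
    (Finset.sum_eq_zero_iff_of_nonneg hnn).mp key i (Finset.mem_univ i)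
  -- a vanishes off the active set of p
  have hoff : ∀ i, a i ≠ 0 → ∑ r, A i r * p r = b i := by
    intro i hi
    have hpos : 0 < a i * (Real.exp (a i) - 1) := by
      rcases lt_or_gt_of_ne hi with h | h
      · have : Real.exp (a i) < 1 := Real.exp_lt_one_iff.mpr h
        exact mul_pos_of_neg_of_neg h (by linarith)
      · have : 1 < Real.exp (a i) := by
          rw [← Real.exp_zero]; exact Real.exp_lt_exp.mpr h
        exact mul_pos h (by linarith)
    have := hterm i
    have hdpi : dp i = 0 := by
      by_contra hne
      have : 0 < dp i := lt_of_le_of_ne (hdp0 i) (Ne.symm hne)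
      nlinarith [hterm i]
    simpa [hdp, sub_eq_zero] using hdpi
  -- linear independence on the active set forces a = 0 there
  have hli := hsimple p hp
  have hsum : ∑ i : {i : ι // ∑ r, A i r * p r = b i}, a i.1 • A i.1 = 0 := by
    funext r
    have h1 : ∑ i : {i : ι // ∑ r, A i r * p r = b i}, a i.1 * A i.1 r
        = ∑ i ∈ Finset.univ.filter (fun i => ∑ r, A i r * p r = b i), a i * A i r :=
      (Finset.sum_subtype (Finset.univ.filter (fun i => ∑ r, A i r * p r = b i))
        (fun x => by simp) (fun i => a i * A i r)).symm
    have h2 : ∑ i ∈ Finset.univ.filter (fun i => ∑ r, A i r * p r = b i), a i * A i r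
        = ∑ i, a i * A i r := by
      apply Finset.sum_subset (Finset.filter_subset _ _)
      intro i _ hi
      have : a i = 0 := by
        by_contra hne
        exact hi (Finset.mem_filter.mpr ⟨Finset.mem_univ i, hoff i hne⟩)
      simp [this]
    have : ∑ i : {i : ι // ∑ r, A i r * p r = b i}, a i.1 * A i.1 r = 0 := by
      rw [h1, h2, hcol]
    simpa using this
  have hzero : ∀ i : {i : ι // ∑ r, A i r * p r = b i}, a i.1 = 0 := by
    have := (Fintype.linearIndependent_iff.mp hli) (fun i => a i.1) hsum
    exact this
  have ha0 : a = 0 := by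
    ext i
    by_cases h : ∑ r, A i r * p r = b i
    · exact hzero ⟨i, h⟩
    · by_contra hne
      exact h (hoff i hne)
  refine ⟨ha0, ?_⟩
  apply hrank
  funext i
  have := horbit i
  rw [ha0] at this
  simp at this
  simp only []
  linarith
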